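/- For natural numbers t and k with k ≥ 1, the number of natural numbers n < 2^t such that the Catalan number Cₙ is congruent to 0 modulo 2^k equals the sum of binomial coefficients Σ_{i=k+1}^{t} binomial(t, i). -/

import Mathlib

open Finset

/-- Binary digit sum. -/
private def S (n : ℕ) : ℕ := (Nat.digits 2 n).sum

private lemma S_zero : S 0 = 0 := by simp [S]

private lemma S_eq (n : ℕ) (h : 0 < n) : S n = n % 2 + S (n / 2) := by
  unfold S
  rw [Nat.digits_def' (by norm_num) h, List.sum_cons]

private lemma S_two_mul (n : ℕ) : S (2 * n) = S n := by
  rcases Nat.eq_zero_or_pos n with h | h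
  · simp [h, S_zero]
  · rw [S_eq (2 * n) (by omega)]
    simp [Nat.mul_div_cancel_left, Nat.mul_mod_right]

private lemma S_add_pow (t : ℕ) : ∀ m < 2 ^ t, S (m + 2 ^ t) = S m + 1 := by
  induction t with
  | zero =>
    intro m hm; interval_cases m; norm_num; rw [S_eq 1 one_pos]; simp [S_zero]
  | succ t ih =>
    intro m hm
    rw [S_eq (m + 2 ^ (t + 1)) (by positivity)]
    have h2 : (m + 2 ^ (t + 1)) % 2 = m % 2 := by omega
    have h3 : (m + 2 ^ (t + 1)) / 2 = m / 2 + 2 ^ t := by omega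
    rw [h2, h3, ih (m / 2) (by omega)]
    rcases Nat.eq_zero_or_pos m with h | h
    · simp [h, S_zero]
    · rw [S_eq m h]; omega

private lemma catalan_ne_zero (n : ℕ) : catalan n ≠ 0 := by
  have h := succ_mul_catalan_eq_centralBinom n
  have := Nat.centralBinom_pos n
  intro hc; rw [hc] at h; omega

private lemma legendre2 (n : ℕ) : padicValNat 2 (Nat.factorial n) + S n = n := by
  have h := @sub_one_mul_padicValNat_factorial 2 ⟨Nat.prime_two⟩ n
  have h2 := Nat.digit_sum_le 2 n
  unfold S; omega

private lemma val_centralBinom (n : ℕ) : padicValNat 2 (Nat.centralBinom n) = S n := by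
  have h := @sub_one_mul_padicValNat_choose_eq_sub_sum_digits 2 n (2 * n) ⟨Nat.prime_two⟩ (by omega)
  have h2 : 2 * n - n = n := by omega
  rw [h2] at h
  have h3 : S (2 * n) = S n := S_two_mul n
  unfold Nat.centralBinom
  unfold S at *
  omega

private lemma val_catalan (n : ℕ) : padicValNat 2 (catalan n) + 1 = S (n + 1) := by
  haveI : Fact (Nat.Prime 2) := ⟨Nat.prime_two⟩
  have hmul : (n + 1) * catalan n = Nat.centralBinom n := succ_mul_catalan_eq_centralBinom n
  have h1 : padicValNat 2 ((n+1) * catalan n) = padicValNat 2 (n+1) + padicValNat 2 (catalan n) :=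
    padicValNat.mul (by omega) (catalan_ne_zero n)
  rw [hmul, val_centralBinom] at h1
  have h2 : padicValNat 2 (Nat.factorial (n+1))
      = padicValNat 2 (n+1) + padicValNat 2 (Nat.factorial n) := by
    rw [Nat.factorial_succ, padicValNat.mul (by omega) (Nat.factorial_ne_zero n)]
  have l1 := legendre2 (n + 1)
  have l2 := legendre2 n
  omega

private lemma dvd_catalan_iff (k n : ℕ) : 2 ^ k ∣ catalan n ↔ k + 1 ≤ S (n + 1) := by
  have h := val_catalan n
  rw [Nat.Prime.pow_dvd_iff_le_factorization Nat.prime_two (catalan_ne_zero n),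
    Nat.factorization_def _ Nat.prime_two]
  omega

private lemma sum_choose_shift (t j : ℕ) :
    ∑ i ∈ Icc j t, t.choose (i + 1) = ∑ i ∈ Icc (j + 1) t, t.choose i := by
  have key : ∑ i ∈ (Icc j t).image (· + 1), t.choose i = ∑ i ∈ Icc j t, t.choose (i + 1) :=
    Finset.sum_image (fun a _ b _ h => by omega)
  rw [Finset.image_add_right_Icc] at key
  rw [← key]
  rcases le_or_gt (j + 1) (t + 1) with h | h
  · rw [Finset.sum_Icc_succ_top h, Nat.choose_succ_self, add_zero]
  · rw [Finset.Icc_eq_empty (by omega), Finset.Icc_eq_empty (by omega)]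

private lemma sum_choose_succ (t j : ℕ) :
    ∑ i ∈ Icc (j + 1) (t + 1), (t + 1).choose i
      = ∑ i ∈ Icc (j + 1) t, t.choose i + ∑ i ∈ Icc j t, t.choose i := by
  have him : Icc (j + 1) (t + 1) = (Icc j t).image (· + 1) := by
    rw [Finset.image_add_right_Icc]
  rw [him, Finset.sum_image (fun a _ b _ h => by omega)]
  simp only [Nat.choose_succ_succ, Nat.succ_eq_add_one]
  rw [Finset.sum_add_distrib, add_comm, sum_choose_shift]

private lemma count_S (t : ℕ) : ∀ j, ((Finset.range (2 ^ t)).filter (fun m => j ≤ S m)).card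
    = ∑ i ∈ Icc j t, t.choose i := by
  induction t with
  | zero =>
    intro j
    rcases Nat.eq_zero_or_pos j with rfl | hj
    · simp
    · rw [Finset.filter_false_of_mem, Finset.card_empty, Finset.Icc_eq_empty (by omega),
        Finset.sum_empty]
      intro x hx
      simp only [Finset.mem_range, pow_zero] at hx
      interval_cases x
      simp [S_zero]; omega
  | succ t ih =>
    intro j
    have hpow : 2 ^ (t + 1) = 2 ^ t + 2 ^ t := by rw [pow_succ]; omega
    have hsplit : Finset.range (2 ^ (t + 1)) =
        Finset.range (2 ^ t) ∪ (Finset.range (2 ^ t)).image (· + 2 ^ t) := by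
      ext x
      simp only [Finset.mem_range, Finset.mem_union, Finset.mem_image]
      constructor
      · intro hx
        rcases lt_or_ge x (2 ^ t) with h | h
        · exact Or.inl h
        · exact Or.inr ⟨x - 2 ^ t, by omega, by omega⟩
      · rintro (h | ⟨b, hb, rfl⟩) <;> omega
    have hdisj : Disjoint ((Finset.range (2 ^ t)).filter (fun m => j ≤ S m))
        (((Finset.range (2 ^ t)).image (· + 2 ^ t)).filter (fun m => j ≤ S m)) := by
      apply Finset.disjoint_filter_filter
      rw [Finset.disjoint_left]
      intro a ha hb
      simp only [Finset.mem_range, Finset.mem_image] at ha hb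
      obtain ⟨b, hb1, hb2⟩ := hb
      omega
    rw [hsplit, Finset.filter_union, Finset.card_union_of_disjoint hdisj]
    rw [Finset.filter_image,
      Finset.card_image_of_injective _ (add_left_injective (2 ^ t))]
    have hcongr : (Finset.range (2 ^ t)).filter (fun m => j ≤ S (m + 2 ^ t))
        = (Finset.range (2 ^ t)).filter (fun m => j ≤ S m + 1) := by
      apply Finset.filter_congr
      intro x hx
      rw [S_add_pow t x (Finset.mem_range.mp hx)]
    rw [hcongr]
    rcases j with _ | j
    · have h1 : (Finset.range (2 ^ t)).filter (fun m => 0 ≤ S m) = Finset.range (2 ^ t) :=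
        Finset.filter_true_of_mem (fun _ _ => Nat.zero_le _)
      have h2 : (Finset.range (2 ^ t)).filter (fun m => 0 ≤ S m + 1) = Finset.range (2 ^ t) :=
        Finset.filter_true_of_mem (fun _ _ => Nat.zero_le _)
      have hicc : Finset.Icc 0 (t + 1) = Finset.range (t + 2) := by
        ext x; simp; omega
      rw [h1, h2, Finset.card_range, hicc, Nat.sum_range_choose]
      omega
    · have : (Finset.range (2 ^ t)).filter (fun m => j + 1 ≤ S m + 1)
          = (Finset.range (2 ^ t)).filter (fun m => j ≤ S m) := by
        apply Finset.filter_congr; intro x _; simp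
      rw [this, ih (j + 1), ih j, sum_choose_succ]

/-- `#{n < 2^t : Cₙ ≡ 0 (mod 2^k)} = Σ_{i=k+1}^{t} C(t, i)`. -/
theorem card_catalan_modEq_zero (t k : ℕ) (hk : 1 ≤ k) :
    {n : ℕ | n < 2 ^ t ∧ catalan n ≡ 0 [MOD 2 ^ k]}.ncard
      = ∑ i ∈ Finset.Icc (k + 1) t, t.choose i := by
  have hset : {n : ℕ | n < 2 ^ t ∧ catalan n ≡ 0 [MOD 2 ^ k]}
      = ↑((Finset.range (2 ^ t)).filter (fun n => k + 1 ≤ S (n + 1))) := by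
    ext n
    simp only [Set.mem_setOf_eq, Finset.coe_filter, Finset.mem_range]
    rw [Nat.modEq_zero_iff_dvd, dvd_catalan_iff]
  rw [hset, Set.ncard_coe_finset]
  have hshift : ((Finset.range (2 ^ t)).filter (fun n => k + 1 ≤ S (n + 1))).card
      = ((Finset.Ico 1 (2 ^ t + 1)).filter (fun m => k + 1 ≤ S m)).card := by
    rw [show Finset.Ico 1 (2 ^ t + 1) = (Finset.range (2 ^ t)).image (· + 1) by
        rw [Finset.range_eq_Ico, Finset.image_add_right_Ico],
      Finset.filter_image, Finset.card_image_of_injective _ (add_left_injective 1)]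
  have hSp : S (2 ^ t) = 1 := by
    have := S_add_pow t 0 (pow_pos (by norm_num) t)
    simpa [S_zero] using this
  have heq : (Finset.Ico 1 (2 ^ t + 1)).filter (fun m => k + 1 ≤ S m)
      = (Finset.range (2 ^ t)).filter (fun m => k + 1 ≤ S m) := by
    ext x
    simp only [Finset.mem_filter, Finset.mem_Ico, Finset.mem_range]
    constructor
    · rintro ⟨⟨h1, h2⟩, h3⟩
      refine ⟨?_, h3⟩
      rcases lt_or_ge x (2 ^ t) with h | h
      · exact h
      · have hx : x = 2 ^ t := by omega
        rw [hx, hSp] at h3; omega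
    · rintro ⟨h1, h2⟩
      refine ⟨⟨?_, by omega⟩, h2⟩
      rcases Nat.eq_zero_or_pos x with rfl | h
      · rw [S_zero] at h2; omega
      · omega
  rw [hshift, heq, count_S]
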